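/- Let (Ω, ℱ, P) be a probability space, (A, 𝒜, ν) a σ-finite measure space, T > 0, μ : [0,T] × [0,T] × A → ℝ a ℬ([0,T]²) ⊗ 𝒜-measurable function, and h : [0,T] × [0,T] × Ω × A → ℝ a measurable function. Then there exists a universal constant C such that E ∫_0^T | ∫_t^T ∫_A h(t,s,a) μ(s,t;a) ν(da) ds |² dt ≤ C · (sup_{a∈A} E ∫_0^T sup_{t≤s} |h(t,s,a)|² ds) · (∫_A sup_{s∈[0,T]} ∫_0^s |μ(s,t;a)| dt ν(da)) · (sup_{t∈[0,T]} ∫_t^T ∫_A |μ(s,t;a)| ν(da) ds), where E denotes expectation (integration over Ω with respect to P). -/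

import Mathlib

open MeasureTheory Real Set

open scoped ENNReal

noncomputable def chi : ℝ × ℝ → ℝ≥0∞ := fun p => if p.1 < p.2 then 1 else 0

lemma mchi : Measurable chi :=
  measurable_const.ite (measurableSet_lt measurable_fst measurable_snd) measurable_const

lemma chi_of_lt {t s : ℝ} (h : t < s) : chi (t, s) = 1 := if_pos h

lemma chi_of_not {t s : ℝ} (h : ¬ t < s) : chi (t, s) = 0 := if_neg h

lemma chi_ind (t s : ℝ) (f : ℝ → ℝ≥0∞) : (Ioi t).indicator f s = chi (t, s) * f s := by
  simp only [Set.indicator_apply, mem_Ioi, chi]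
  split <;> simp

lemma chi_ind' (t s : ℝ) (g : ℝ → ℝ≥0∞) : chi (t, s) * g t = (Iio s).indicator g t := by
  simp only [Set.indicator_apply, mem_Iio, chi]
  split <;> simp

lemma auxHalfSq (w : ℝ≥0∞) : (w ^ (1/2 : ℝ)) ^ (2 : ℕ) = w := by
  rw [← ENNReal.rpow_natCast (w ^ (1/2:ℝ)) 2, ← ENNReal.rpow_mul]
  norm_num

lemma auxCS {α : Type*} [MeasurableSpace α] (m : Measure α) (u v : α → ℝ≥0∞)
    (hu : AEMeasurable u m) (hv : AEMeasurable v m) :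
    (∫⁻ x, u x * v x ∂m) ^ 2 ≤ (∫⁻ x, v x ∂m) * (∫⁻ x, u x ^ 2 * v x ∂m) := by
  have hpq : Real.HolderConjugate 2 2 := Real.HolderConjugate.two_two
  have key := ENNReal.lintegral_mul_le_Lp_mul_Lq m hpq
    (f := fun x => (v x) ^ (1/2:ℝ)) (g := fun x => u x * (v x) ^ (1/2:ℝ))
    (hv.pow_const _) (hu.mul (hv.pow_const _))
  have h1 : ∀ x : α, ((fun x => (v x) ^ (1/2:ℝ)) * fun x => u x * (v x) ^ (1/2:ℝ)) x
      = u x * v x := by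
    intro x
    have : (v x) ^ (1/2:ℝ) * (v x) ^ (1/2:ℝ) = v x := by
      rw [← ENNReal.rpow_add_of_nonneg _ _ (by norm_num) (by norm_num)]
      norm_num
    simp only [Pi.mul_apply]
    calc (v x) ^ (1/2:ℝ) * (u x * (v x) ^ (1/2:ℝ))
        = u x * ((v x) ^ (1/2:ℝ) * (v x) ^ (1/2:ℝ)) := by ring
      _ = u x * v x := by rw [this]
  rw [lintegral_congr h1] at key
  have h2 : ∀ x : α, ((v x) ^ (1/2:ℝ)) ^ (2:ℝ) = v x := fun x => by
    rw [← ENNReal.rpow_mul]; norm_num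
  have h3 : ∀ x : α, (u x * (v x) ^ (1/2:ℝ)) ^ (2:ℝ) = u x ^ 2 * v x := fun x => by
    rw [ENNReal.mul_rpow_of_nonneg _ _ (by norm_num : (0:ℝ) ≤ 2), ← ENNReal.rpow_mul,
      ← ENNReal.rpow_natCast (u x) 2]
    norm_num
  rw [lintegral_congr h2, lintegral_congr h3] at key
  calc (∫⁻ x, u x * v x ∂m) ^ 2
      ≤ ((∫⁻ x, v x ∂m) ^ (1/2:ℝ) * (∫⁻ x, u x ^ 2 * v x ∂m) ^ (1/2:ℝ)) ^ 2 :=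
        pow_le_pow_left₀ (zero_le) key 2
    _ = (∫⁻ x, v x ∂m) * (∫⁻ x, u x ^ 2 * v x ∂m) := by
        rw [mul_pow, auxHalfSq, auxHalfSq]

lemma auxAbsInt {α : Type*} [MeasurableSpace α] (μ : Measure α) (f : α → ℝ) :
    ENNReal.ofReal |∫ x, f x ∂μ| ≤ ∫⁻ x, ENNReal.ofReal |f x| ∂μ := by
  calc ENNReal.ofReal |∫ x, f x ∂μ| = ‖∫ x, f x ∂μ‖ₑ := (Real.enorm_eq_ofReal_abs _).symm
    _ ≤ ∫⁻ x, ‖f x‖ₑ ∂μ := enorm_integral_le_lintegral_enorm _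
    _ = ∫⁻ x, ENNReal.ofReal |f x| ∂μ := lintegral_congr fun x => Real.enorm_eq_ofReal_abs _

lemma auxSetEq {T t : ℝ} (ht : 0 ≤ t) : Ioi t ∩ Ioc (0:ℝ) T = Ioc t T := by
  ext s
  simp only [mem_inter_iff, mem_Ioi, mem_Ioc]
  constructor
  · rintro ⟨h1, _, h3⟩; exact ⟨h1, h3⟩
  · rintro ⟨h1, h2⟩; exact ⟨h1, lt_of_le_of_lt ht h1, h2⟩

lemma auxIndIoc {T t : ℝ} (ht : 0 ≤ t) (f : ℝ → ℝ≥0∞) :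
    ∫⁻ s in Ioc t T, f s = ∫⁻ s in Ioc (0:ℝ) T, chi (t, s) * f s := by
  rw [show (fun s => chi (t, s) * f s) = fun s => (Ioi t).indicator f s from
    funext fun s => (chi_ind t s f).symm]
  rw [lintegral_indicator measurableSet_Ioi, Measure.restrict_restrict measurableSet_Ioi,
    auxSetEq ht]

lemma auxTInt (T s : ℝ) (g : ℝ → ℝ≥0∞) :
    ∫⁻ t in Ioc (0:ℝ) T, chi (t, s) * g t ≤ ∫⁻ t in Ioc (0:ℝ) s, g t := by
  rw [show (fun t => chi (t, s) * g t) = fun t => (Iio s).indicator g t from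
    funext fun t => chi_ind' t s g]
  rw [lintegral_indicator measurableSet_Iio, Measure.restrict_restrict measurableSet_Iio]
  have hsub : Iio s ∩ Ioc (0:ℝ) T ⊆ Ioc (0:ℝ) s := by
    rintro t ⟨h1, h2, _⟩
    exact ⟨h2, le_of_lt h1⟩
  exact lintegral_mono' (Measure.restrict_mono hsub le_rfl) le_rfl

lemma auxSwap {α β : Type*} [MeasurableSpace α] [MeasurableSpace β]
    (μ : Measure α) (ν : Measure β) [SFinite μ] [SFinite ν] {f : α → β → ℝ≥0∞}
    (hf : Measurable fun p : α × β => f p.1 p.2) :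
    ∫⁻ x, ∫⁻ y, f x y ∂ν ∂μ = ∫⁻ y, ∫⁻ x, f x y ∂μ ∂ν :=
  lintegral_lintegral_swap hf.aemeasurable

section Meas

variable {Ω A : Type} [MeasurableSpace Ω] [MeasurableSpace A]
  (ν : Measure A) [SigmaFinite ν]
  {μf : ℝ → ℝ → A → ℝ} {h : ℝ → ℝ → Ω → A → ℝ}

lemma mMf (hμf : Measurable (fun q : ℝ × ℝ × A => μf q.1 q.2.1 q.2.2)) :
    Measurable fun p : ℝ × ℝ × A => ENNReal.ofReal |μf p.1 p.2.1 p.2.2| :=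
  ENNReal.measurable_ofReal.comp hμf.abs

lemma mHf (hh : Measurable (fun q : ℝ × ℝ × Ω × A => h q.1 q.2.1 q.2.2.1 q.2.2.2)) :
    Measurable fun p : ℝ × ℝ × Ω × A => ENNReal.ofReal |h p.1 p.2.1 p.2.2.1 p.2.2.2| :=
  ENNReal.measurable_ofReal.comp hh.abs

variable (hμf : Measurable (fun q : ℝ × ℝ × A => μf q.1 q.2.1 q.2.2))
  (hh : Measurable (fun q : ℝ × ℝ × Ω × A => h q.1 q.2.1 q.2.2.1 q.2.2.2))

include hμf in
lemma mMa (s t : ℝ) : Measurable fun a : A => ENNReal.ofReal |μf s t a| :=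
  (mMf hμf).comp (measurable_const.prodMk (measurable_const.prodMk measurable_id))

include hμf in
lemma mMchi (s : ℝ) : Measurable fun t : ℝ => chi (t, s) * ∫⁻ a, ENNReal.ofReal |μf s t a| ∂ν :=
  (mchi.comp (measurable_id.prodMk measurable_const)).mul
    (Measurable.lintegral_prod_right'
      (f := fun q : ℝ × A => ENNReal.ofReal |μf s q.1 q.2|)
      ((mMf hμf).comp (measurable_const.prodMk (measurable_fst.prodMk measurable_snd))))

include hμf in
lemma mMchi2 (a : A) (s : ℝ) : Measurable fun t : ℝ => chi (t, s) * ENNReal.ofReal |μf s t a| :=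
  (mchi.comp (measurable_id.prodMk measurable_const)).mul
    ((mMf hμf).comp (measurable_const.prodMk (measurable_id.prodMk measurable_const)))

include hμf in
lemma mMinner : Measurable fun p : ℝ × ℝ => chi (p.1, p.2) * ∫⁻ a, ENNReal.ofReal |μf p.2 p.1 a| ∂ν :=
  mchi.mul (Measurable.lintegral_prod_right'
    (f := fun q : (ℝ × ℝ) × A => ENNReal.ofReal |μf q.1.2 q.1.1 q.2|)
    ((mMf hμf).comp (measurable_fst.snd.prodMk (measurable_fst.fst.prodMk measurable_snd))))

include hμf hh in
lemma mPf : Measurable fun q : ℝ × ℝ × Ω × A =>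
    ENNReal.ofReal |h q.1 q.2.1 q.2.2.1 q.2.2.2| ^ 2 * ENNReal.ofReal |μf q.2.1 q.1 q.2.2.2| :=
  ((mHf hh).pow_const 2).mul ((mMf hμf).comp (measurable_snd.fst.prodMk
    (measurable_fst.prodMk measurable_snd.snd.snd)))

include hμf hh in
lemma mcore : Measurable fun q : ℝ × ℝ × Ω × A =>
    chi (q.1, q.2.1) * (ENNReal.ofReal |h q.1 q.2.1 q.2.2.1 q.2.2.2| ^ 2
      * ENNReal.ofReal |μf q.2.1 q.1 q.2.2.2|) :=
  (mchi.comp (measurable_fst.prodMk measurable_snd.fst)).mul (mPf hμf hh)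

include hμf hh in
lemma mPfa (t s : ℝ) (ω : Ω) : Measurable fun a : A =>
    ENNReal.ofReal |h t s ω a| ^ 2 * ENNReal.ofReal |μf s t a| :=
  by
  have step := (mPf hμf hh).comp (show Measurable fun a : A => ((t, s, ω, a) : ℝ × ℝ × Ω × A) from
    measurable_const.prodMk (measurable_const.prodMk
      (measurable_const.prodMk measurable_id)))
  simpa [Function.comp_def] using step

include hμf hh in
lemma mV2 : Measurable fun p : ℝ × ℝ × Ω =>
    ∫⁻ a, ENNReal.ofReal |h p.1 p.2.1 p.2.2 a| ^ 2 * ENNReal.ofReal |μf p.2.1 p.1 a| ∂ν :=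
  by
  have inner : Measurable fun q : (ℝ × ℝ × Ω) × A => ENNReal.ofReal |h q.1.1 q.1.2.1 q.1.2.2 q.2| ^ 2
      * ENNReal.ofReal |μf q.1.2.1 q.1.1 q.2| := by
    have step := (mPf hμf hh).comp (show Measurable fun q : (ℝ × ℝ × Ω) × A =>
        ((q.1.1, q.1.2.1, q.1.2.2, q.2) : ℝ × ℝ × Ω × A) from
      measurable_fst.fst.prodMk (measurable_fst.snd.fst.prodMk
        (measurable_fst.snd.snd.prodMk measurable_snd)))
    simpa [Function.comp_def] using step
  exact inner.lintegral_prod_right'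

include hμf hh in
lemma mW : Measurable fun p : ℝ × ℝ × Ω => chi (p.1, p.2.1)
    * ∫⁻ a, ENNReal.ofReal |h p.1 p.2.1 p.2.2 a| ^ 2 * ENNReal.ofReal |μf p.2.1 p.1 a| ∂ν :=
  (mchi.comp (measurable_fst.prodMk measurable_snd.fst)).mul (mV2 ν hμf hh)

include hh in
lemma mUta (t : ℝ) (ω : Ω) : Measurable fun p : ℝ × A => ENNReal.ofReal |h t p.1 ω p.2| := by
  have step := (mHf hh).comp (show Measurable fun p : ℝ × A => ((t, p.1, ω, p.2) : ℝ × ℝ × Ω × A)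
    from measurable_const.prodMk (measurable_fst.prodMk
      (measurable_const.prodMk measurable_snd)))
  simpa [Function.comp_def] using step

include hμf in
lemma mMsa2 (t : ℝ) : Measurable fun p : ℝ × A => ENNReal.ofReal |μf p.1 t p.2| := by
  have step := (mMf hμf).comp (show Measurable fun p : ℝ × A => ((p.1, t, p.2) : ℝ × ℝ × A)
    from measurable_fst.prodMk (measurable_const.prodMk measurable_snd))
  simpa [Function.comp_def] using step

include hμf in
lemma mMta2 (s : ℝ) : Measurable fun p : ℝ × A => ENNReal.ofReal |μf s p.1 p.2| := by
  have step := (mMf hμf).comp (show Measurable fun p : ℝ × A => ((s, p.1, p.2) : ℝ × ℝ × A)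
    from measurable_const.prodMk (measurable_fst.prodMk measurable_snd))
  simpa [Function.comp_def] using step

include hμf in
lemma mMint (t : ℝ) : Measurable fun s : ℝ => ∫⁻ a, ENNReal.ofReal |μf s t a| ∂ν := by
  have inner : Measurable fun p : ℝ × A => ENNReal.ofReal |μf p.1 t p.2| := mMsa2 hμf t
  exact inner.lintegral_prod_right'

include hμf hh in
lemma mE1 (ω : Ω) : Measurable fun p : ℝ × ℝ => chi (p.1, p.2)
    * ∫⁻ a, ENNReal.ofReal |h p.1 p.2 ω a| ^ 2 * ENNReal.ofReal |μf p.2 p.1 a| ∂ν := by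
  have step := (mW ν hμf hh).comp (show Measurable fun p : ℝ × ℝ => ((p.1, p.2, ω) : ℝ × ℝ × Ω)
    from measurable_fst.prodMk (measurable_snd.prodMk measurable_const))
  simpa [Function.comp_def] using step

include hμf hh in
lemma mRt (T : ℝ) (ω : Ω) : Measurable fun t : ℝ => ∫⁻ s in Ioc (0:ℝ) T,
    chi (t, s) * ∫⁻ a, ENNReal.ofReal |h t s ω a| ^ 2 * ENNReal.ofReal |μf s t a| ∂ν :=
  (mE1 ν hμf hh ω).lintegral_prod_right'

include hμf hh in
lemma mG (T : ℝ) : Measurable fun ω : Ω => ∫⁻ t in Ioc (0:ℝ) T, ∫⁻ s in Ioc (0:ℝ) T,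
    chi (t, s) * ∫⁻ a, ENNReal.ofReal |h t s ω a| ^ 2 * ENNReal.ofReal |μf s t a| ∂ν := by
  have inner2 : Measurable fun r : (Ω × ℝ) × ℝ => chi (r.1.2, r.2)
      * ∫⁻ a, ENNReal.ofReal |h r.1.2 r.2 r.1.1 a| ^ 2 * ENNReal.ofReal |μf r.2 r.1.2 a| ∂ν := by
    have step := (mW ν hμf hh).comp (show Measurable fun r : (Ω × ℝ) × ℝ =>
        ((r.1.2, r.2, r.1.1) : ℝ × ℝ × Ω) from
      measurable_fst.snd.prodMk (measurable_snd.prodMk measurable_fst.fst))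
    simpa [Function.comp_def] using step
  have inner : Measurable fun q : Ω × ℝ => ∫⁻ s in Ioc (0:ℝ) T, chi (q.2, s)
      * ∫⁻ a, ENNReal.ofReal |h q.2 s q.1 a| ^ 2 * ENNReal.ofReal |μf s q.2 a| ∂ν :=
    inner2.lintegral_prod_right'
  exact inner.lintegral_prod_right'

include hμf hh in
lemma mE3 (s : ℝ) (ω : Ω) : Measurable fun p : ℝ × A => chi (p.1, s)
    * (ENNReal.ofReal |h p.1 s ω p.2| ^ 2 * ENNReal.ofReal |μf s p.1 p.2|) := by
  have step := (mcore hμf hh).comp (show Measurable fun p : ℝ × A =>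
      ((p.1, s, ω, p.2) : ℝ × ℝ × Ω × A) from
    measurable_fst.prodMk (measurable_const.prodMk
      (measurable_const.prodMk measurable_snd)))
  simpa [Function.comp_def] using step

include hμf hh in
lemma mE4 (T : ℝ) (ω : Ω) : Measurable fun p : ℝ × A => ∫⁻ t in Ioc (0:ℝ) T,
    chi (t, p.1) * (ENNReal.ofReal |h t p.1 ω p.2| ^ 2 * ENNReal.ofReal |μf p.1 t p.2|) := by
  have inner : Measurable fun q : (ℝ × A) × ℝ => chi (q.2, q.1.1)
      * (ENNReal.ofReal |h q.2 q.1.1 ω q.1.2| ^ 2 * ENNReal.ofReal |μf q.1.1 q.2 q.1.2|) := by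
    have step := (mcore hμf hh).comp (show Measurable fun q : (ℝ × A) × ℝ =>
        ((q.2, q.1.1, ω, q.1.2) : ℝ × ℝ × Ω × A) from
      measurable_snd.prodMk (measurable_fst.fst.prodMk
        (measurable_const.prodMk measurable_fst.snd)))
    simpa [Function.comp_def] using step
  exact inner.lintegral_prod_right'

include hμf hh in
lemma mE5 (T : ℝ) : Measurable fun p : Ω × A => ∫⁻ s in Ioc (0:ℝ) T, ∫⁻ t in Ioc (0:ℝ) T,
    chi (t, s) * (ENNReal.ofReal |h t s p.1 p.2| ^ 2 * ENNReal.ofReal |μf s t p.2|) := by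
  have inner2 : Measurable fun q : ((Ω × A) × ℝ) × ℝ => chi (q.2, q.1.2)
      * (ENNReal.ofReal |h q.2 q.1.2 q.1.1.1 q.1.1.2| ^ 2
        * ENNReal.ofReal |μf q.1.2 q.2 q.1.1.2|) := by
    have step := (mcore hμf hh).comp (show Measurable fun q : ((Ω × A) × ℝ) × ℝ =>
        ((q.2, q.1.2, q.1.1.1, q.1.1.2) : ℝ × ℝ × Ω × A) from
      measurable_snd.prodMk (measurable_fst.snd.prodMk
        (measurable_fst.fst.fst.prodMk measurable_fst.fst.snd)))
    simpa [Function.comp_def] using step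
  have inner : Measurable fun q : (Ω × A) × ℝ => ∫⁻ t in Ioc (0:ℝ) T, chi (t, q.2)
      * (ENNReal.ofReal |h t q.2 q.1.1 q.1.2| ^ 2 * ENNReal.ofReal |μf q.2 t q.1.2|) :=
    inner2.lintegral_prod_right'
  exact inner.lintegral_prod_right'

include hμf hh in
lemma mB1 (ω : Ω) (a : A) : Measurable fun p : ℝ × ℝ => chi (p.2, p.1)
    * (ENNReal.ofReal |h p.2 p.1 ω a| ^ 2 * ENNReal.ofReal |μf p.1 p.2 a|) := by
  have step := (mcore hμf hh).comp (show Measurable fun p : ℝ × ℝ =>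
      ((p.2, p.1, ω, a) : ℝ × ℝ × Ω × A) from
    measurable_snd.prodMk (measurable_fst.prodMk
      (measurable_const.prodMk measurable_const)))
  simpa [Function.comp_def] using step

include hμf hh in
lemma mB2 (T : ℝ) (a : A) : Measurable fun p : Ω × ℝ => ∫⁻ s in Ioc (0:ℝ) T,
    chi (p.2, s) * (ENNReal.ofReal |h p.2 s p.1 a| ^ 2 * ENNReal.ofReal |μf s p.2 a|) := by
  have inner : Measurable fun q : (Ω × ℝ) × ℝ => chi (q.1.2, q.2)
      * (ENNReal.ofReal |h q.1.2 q.2 q.1.1 a| ^ 2 * ENNReal.ofReal |μf q.2 q.1.2 a|) := by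
    have step := (mcore hμf hh).comp (show Measurable fun q : (Ω × ℝ) × ℝ =>
        ((q.1.2, q.2, q.1.1, a) : ℝ × ℝ × Ω × A) from
      measurable_fst.snd.prodMk (measurable_snd.prodMk
        (measurable_fst.fst.prodMk measurable_const)))
    simpa [Function.comp_def] using step
  exact inner.lintegral_prod_right'

include hh in
lemma mHchi (t : ℝ) (a : A) : Measurable fun p : Ω × ℝ =>
    chi (t, p.2) * ENNReal.ofReal |h t p.2 p.1 a| ^ 2 := by
  have hm : Measurable fun p : Ω × ℝ => ENNReal.ofReal |h t p.2 p.1 a| := by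
    have step := (mHf hh).comp (show Measurable fun p : Ω × ℝ =>
        ((t, p.2, p.1, a) : ℝ × ℝ × Ω × A) from
      measurable_const.prodMk (measurable_snd.prodMk
        (measurable_fst.prodMk measurable_const)))
    simpa [Function.comp_def] using step
  exact (mchi.comp (measurable_const.prodMk measurable_snd)).mul (hm.pow_const 2)

include hh in
lemma mZ (T t : ℝ) (a : A) : Measurable fun ω : Ω => ∫⁻ s in Ioc (0:ℝ) T,
    chi (t, s) * ENNReal.ofReal |h t s ω a| ^ 2 :=
  (mHchi hh t a).lintegral_prod_right'

include hh in
lemma mHchi_s (t : ℝ) (ω : Ω) (a : A) : Measurable fun s : ℝ =>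
    chi (t, s) * ENNReal.ofReal |h t s ω a| ^ 2 := by
  have hm : Measurable fun s : ℝ => ENNReal.ofReal |h t s ω a| := by
    have step := (mHf hh).comp (show Measurable fun s : ℝ =>
        ((t, s, ω, a) : ℝ × ℝ × Ω × A) from
      measurable_const.prodMk (measurable_id.prodMk
        (measurable_const.prodMk measurable_const)))
    simpa [Function.comp_def] using step
  exact (mchi.comp (measurable_const.prodMk measurable_id)).mul (hm.pow_const 2)

include hμf in
lemma mQ' (T : ℝ) : Measurable fun t : ℝ => ∫⁻ s in Ioc (0:ℝ) T,
    chi (t, s) * ∫⁻ a, ENNReal.ofReal |μf s t a| ∂ν :=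
  (mMinner ν hμf).lintegral_prod_right'

end Meas

set_option maxHeartbeats 1000000 in
/-- a Fubini-type quadratic estimate. There is a universal constant `C`
such that for every probability space `(Ω,P)`, σ-finite measure space `(A,ν)`, horizon
`T > 0` and measurable kernels `h` and `μf`,
`E∫_0^T |∫_t^T ∫_A h(t,s,a) μf(s,t;a) ν(da) ds|² dt` is bounded by `C` times the product
of the three factors. -/
theorem stmt13 :
    ∃ C : ℝ≥0∞, C ≠ ⊤ ∧
      ∀ (Ω A : Type) [MeasurableSpace Ω] [MeasurableSpace A]
        (P : Measure Ω) [IsProbabilityMeasure P] (ν : Measure A) [SigmaFinite ν]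
        (T : ℝ), 0 < T →
        ∀ (μf : ℝ → ℝ → A → ℝ), Measurable (fun q : ℝ × ℝ × A => μf q.1 q.2.1 q.2.2) →
        ∀ (h : ℝ → ℝ → Ω → A → ℝ),
          Measurable (fun q : ℝ × ℝ × Ω × A => h q.1 q.2.1 q.2.2.1 q.2.2.2) →
          (∫⁻ ω, (∫⁻ t in Ioc (0:ℝ) T,
              ENNReal.ofReal |∫ s in t..T, ∫ a, h t s ω a * μf s t a ∂ν| ^ 2) ∂P) ≤
            C * (⨆ a : A, ∫⁻ ω, (∫⁻ s in Ioc (0:ℝ) T,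
                  (⨆ t : Icc (0:ℝ) s, ENNReal.ofReal |h (t : ℝ) s ω a|) ^ 2) ∂P)
              * (∫⁻ a, (⨆ s : Icc (0:ℝ) T,
                    ∫⁻ t in Ioc (0:ℝ) (s : ℝ), ENNReal.ofReal |μf (s : ℝ) t a|) ∂ν)
              * (⨆ t : Icc (0:ℝ) T, ∫⁻ s in Ioc (t : ℝ) T,
                    ∫⁻ a, ENNReal.ofReal |μf s (t : ℝ) a| ∂ν) := by
  classical
  refine ⟨1, ENNReal.one_ne_top, ?_⟩
  intro Ω A _ _ P _ ν _ T hT μf hμf h hh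
  rw [one_mul]
  have hQle : ∀ t ∈ Ioc (0:ℝ) T,
      (∫⁻ s in Ioc t T, ∫⁻ a, ENNReal.ofReal |μf s t a| ∂ν)
        ≤ ⨆ t' : Icc (0:ℝ) T, ∫⁻ s in Ioc (t' : ℝ) T,
            ∫⁻ a, ENNReal.ofReal |μf s (t' : ℝ) a| ∂ν :=
    fun t ht => le_iSup (fun t' : Icc (0:ℝ) T => ∫⁻ s in Ioc (t' : ℝ) T,
      ∫⁻ a, ENNReal.ofReal |μf s (t' : ℝ) a| ∂ν) ⟨t, ht.1.le, ht.2⟩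
  have eBase : ∀ (ω : Ω) (t : ℝ), t ∈ Ioc (0:ℝ) T →
      ENNReal.ofReal |∫ s in t..T, ∫ a, h t s ω a * μf s t a ∂ν|
        ≤ ∫⁻ s in Ioc t T, ∫⁻ a,
            ENNReal.ofReal |h t s ω a| * ENNReal.ofReal |μf s t a| ∂ν := by
    intro ω t ht
    rw [intervalIntegral.integral_of_le ht.2]
    refine le_trans (auxAbsInt _ _) (lintegral_mono fun s => ?_)
    refine le_trans (auxAbsInt _ _) (lintegral_mono fun a => ?_)
    rw [abs_mul, ENNReal.ofReal_mul (abs_nonneg _)]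
  have eTop : ∀ (ω : Ω) (t : ℝ),
      (∫⁻ s in Ioc t T, ∫⁻ a,
          ENNReal.ofReal |h t s ω a| * ENNReal.ofReal |μf s t a| ∂ν)
        ≤ ⊤ * ∫⁻ s in Ioc t T, ∫⁻ a, ENNReal.ofReal |μf s t a| ∂ν := by
    intro ω t
    calc (∫⁻ s in Ioc t T, ∫⁻ a,
          ENNReal.ofReal |h t s ω a| * ENNReal.ofReal |μf s t a| ∂ν)
        ≤ ∫⁻ s in Ioc t T, ∫⁻ a, ⊤ * ENNReal.ofReal |μf s t a| ∂ν :=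
          lintegral_mono fun s => lintegral_mono fun a => mul_le_mul_left le_top _
      _ = ∫⁻ s in Ioc t T, ⊤ * ∫⁻ a, ENNReal.ofReal |μf s t a| ∂ν :=
          lintegral_congr fun s => lintegral_const_mul _ (mMa hμf s t)
      _ = ⊤ * ∫⁻ s in Ioc t T, ∫⁻ a, ENNReal.ofReal |μf s t a| ∂ν :=
          lintegral_const_mul _ (mMint ν hμf t)
  -- Case: third factor is zero
  by_cases hF3 : (⨆ t : Icc (0:ℝ) T, ∫⁻ s in Ioc (t : ℝ) T,
      ∫⁻ a, ENNReal.ofReal |μf s (t : ℝ) a| ∂ν) = 0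
  · refine le_trans ?_ (zero_le)
    have hzero : ∀ ω : Ω, (∫⁻ t in Ioc (0:ℝ) T,
        ENNReal.ofReal |∫ s in t..T, ∫ a, h t s ω a * μf s t a ∂ν| ^ 2) = 0 := by
      intro ω
      refine le_antisymm ?_ (zero_le)
      calc (∫⁻ t in Ioc (0:ℝ) T,
            ENNReal.ofReal |∫ s in t..T, ∫ a, h t s ω a * μf s t a ∂ν| ^ 2)
          ≤ ∫⁻ _t in Ioc (0:ℝ) T, 0 := by
            refine setLIntegral_mono' measurableSet_Ioc fun t ht => ?_
            have h1 : (∫⁻ s in Ioc t T, ∫⁻ a, ENNReal.ofReal |μf s t a| ∂ν) = 0 :=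
              le_antisymm (hF3 ▸ hQle t ht) (zero_le)
            have h2 : ENNReal.ofReal |∫ s in t..T, ∫ a, h t s ω a * μf s t a ∂ν| ≤ 0 :=
              le_trans (eBase ω t ht) (le_trans (eTop ω t)
                (le_of_eq (by rw [h1, mul_zero])))
            simp [le_antisymm h2 (zero_le)]
        _ = 0 := lintegral_zero
    calc (∫⁻ ω, (∫⁻ t in Ioc (0:ℝ) T,
          ENNReal.ofReal |∫ s in t..T, ∫ a, h t s ω a * μf s t a ∂ν| ^ 2) ∂P)
        = ∫⁻ _ω, 0 ∂P := lintegral_congr hzero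
      _ = 0 := lintegral_zero
      _ ≤ 0 := le_rfl
  -- Case: second factor is zero
  by_cases hF2 : (∫⁻ a, (⨆ s : Icc (0:ℝ) T, ∫⁻ t in Ioc (0:ℝ) (s : ℝ),
      ENNReal.ofReal |μf (s : ℝ) t a|) ∂ν) = 0
  · refine le_trans ?_ (zero_le)
    have hQ'int : (∫⁻ t in Ioc (0:ℝ) T, ∫⁻ s in Ioc (0:ℝ) T,
        chi (t, s) * ∫⁻ a, ENNReal.ofReal |μf s t a| ∂ν) = 0 := by
      refine le_antisymm ?_ (zero_le)
      calc (∫⁻ t in Ioc (0:ℝ) T, ∫⁻ s in Ioc (0:ℝ) T,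
            chi (t, s) * ∫⁻ a, ENNReal.ofReal |μf s t a| ∂ν)
          = ∫⁻ s in Ioc (0:ℝ) T, ∫⁻ t in Ioc (0:ℝ) T,
            chi (t, s) * ∫⁻ a, ENNReal.ofReal |μf s t a| ∂ν :=
            auxSwap _ _ (mMinner ν hμf)
        _ ≤ ∫⁻ _s in Ioc (0:ℝ) T, 0 := by
            refine setLIntegral_mono' measurableSet_Ioc fun s hs => ?_
            calc (∫⁻ t in Ioc (0:ℝ) T, chi (t, s) * ∫⁻ a, ENNReal.ofReal |μf s t a| ∂ν)
                ≤ ∫⁻ t in Ioc (0:ℝ) s, ∫⁻ a, ENNReal.ofReal |μf s t a| ∂ν := auxTInt T s _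
              _ = ∫⁻ a, (∫⁻ t in Ioc (0:ℝ) s, ENNReal.ofReal |μf s t a|) ∂ν :=
                  auxSwap _ ν (mMta2 hμf s)
              _ ≤ ∫⁻ a, (⨆ s' : Icc (0:ℝ) T, ∫⁻ t in Ioc (0:ℝ) (s' : ℝ),
                    ENNReal.ofReal |μf (s' : ℝ) t a|) ∂ν :=
                  lintegral_mono fun a => le_iSup (fun s' : Icc (0:ℝ) T =>
                    ∫⁻ t in Ioc (0:ℝ) (s' : ℝ), ENNReal.ofReal |μf (s' : ℝ) t a|)
                    ⟨s, hs.1.le, hs.2⟩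
              _ = 0 := hF2
        _ = 0 := lintegral_zero
    have hae := (lintegral_eq_zero_iff (mQ' ν hμf T)).mp hQ'int
    have hω : ∀ ω : Ω, (∫⁻ t in Ioc (0:ℝ) T,
        ENNReal.ofReal |∫ s in t..T, ∫ a, h t s ω a * μf s t a ∂ν| ^ 2) ≤ 0 := by
      intro ω
      have hptw : ∀ᵐ t ∂(volume.restrict (Ioc (0:ℝ) T)),
          ENNReal.ofReal |∫ s in t..T, ∫ a, h t s ω a * μf s t a ∂ν| ^ 2 ≤ 0 := by
        filter_upwards [hae, ae_restrict_mem measurableSet_Ioc] with t h0 hmem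
        have h1 : (∫⁻ s in Ioc t T, ∫⁻ a, ENNReal.ofReal |μf s t a| ∂ν) = 0 := by
          rw [auxIndIoc hmem.1.le]
          exact h0
        have h2 : ENNReal.ofReal |∫ s in t..T, ∫ a, h t s ω a * μf s t a ∂ν| ≤ 0 :=
          le_trans (eBase ω t hmem) (le_trans (eTop ω t)
            (le_of_eq (by rw [h1, mul_zero])))
        simp [le_antisymm h2 (zero_le)]
      calc (∫⁻ t in Ioc (0:ℝ) T,
            ENNReal.ofReal |∫ s in t..T, ∫ a, h t s ω a * μf s t a ∂ν| ^ 2)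
          ≤ ∫⁻ _t in Ioc (0:ℝ) T, 0 := lintegral_mono_ae hptw
        _ = 0 := lintegral_zero
    calc (∫⁻ ω, (∫⁻ t in Ioc (0:ℝ) T,
          ENNReal.ofReal |∫ s in t..T, ∫ a, h t s ω a * μf s t a ∂ν| ^ 2) ∂P)
        ≤ ∫⁻ _ω, 0 ∂P := lintegral_mono hω
      _ = 0 := lintegral_zero
  -- Case: first factor is infinite
  by_cases hF1top : (⨆ a : A, ∫⁻ ω, (∫⁻ s in Ioc (0:ℝ) T,
      (⨆ t : Icc (0:ℝ) s, ENNReal.ofReal |h (t : ℝ) s ω a|) ^ 2) ∂P) = ⊤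
  · rw [hF1top, ENNReal.top_mul hF2, ENNReal.top_mul hF3]
    exact le_top
  -- Main case
  -- Step 1 : pointwise Cauchy-Schwarz
  have step1 : ∀ (ω : Ω), ∀ t ∈ Ioc (0:ℝ) T,
      ENNReal.ofReal |∫ s in t..T, ∫ a, h t s ω a * μf s t a ∂ν| ^ 2
        ≤ (∫⁻ s in Ioc t T, ∫⁻ a, ENNReal.ofReal |μf s t a| ∂ν)
          * ∫⁻ s in Ioc t T, ∫⁻ a,
              ENNReal.ofReal |h t s ω a| ^ 2 * ENNReal.ofReal |μf s t a| ∂ν := by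
    intro ω t ht
    refine le_trans (pow_le_pow_left₀ (zero_le) (eBase ω t ht) 2) ?_
    have hu : Measurable fun p : ℝ × A => ENNReal.ofReal |h t p.1 ω p.2| := mUta hh t ω
    have hv : Measurable fun p : ℝ × A => ENNReal.ofReal |μf p.1 t p.2| := mMsa2 hμf t
    have e1 : (∫⁻ s in Ioc t T, ∫⁻ a,
        ENNReal.ofReal |h t s ω a| * ENNReal.ofReal |μf s t a| ∂ν)
        = ∫⁻ p, ENNReal.ofReal |h t p.1 ω p.2| * ENNReal.ofReal |μf p.1 t p.2|
            ∂((volume.restrict (Ioc t T)).prod ν) :=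
      (lintegral_prod _ (hu.mul hv).aemeasurable).symm
    have e2 : (∫⁻ s in Ioc t T, ∫⁻ a, ENNReal.ofReal |μf s t a| ∂ν)
        = ∫⁻ p, ENNReal.ofReal |μf p.1 t p.2| ∂((volume.restrict (Ioc t T)).prod ν) :=
      (lintegral_prod _ hv.aemeasurable).symm
    have e3 : (∫⁻ s in Ioc t T, ∫⁻ a,
        ENNReal.ofReal |h t s ω a| ^ 2 * ENNReal.ofReal |μf s t a| ∂ν)
        = ∫⁻ p, ENNReal.ofReal |h t p.1 ω p.2| ^ 2 * ENNReal.ofReal |μf p.1 t p.2|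
            ∂((volume.restrict (Ioc t T)).prod ν) :=
      (lintegral_prod _ ((hu.pow_const 2).mul hv).aemeasurable).symm
    rw [e1, e2, e3]
    exact auxCS _ _ _ hu.aemeasurable hv.aemeasurable
  -- Step 3 : bound by F3 times the indicator-form quadruple integral
  have step3 : (∫⁻ ω, (∫⁻ t in Ioc (0:ℝ) T,
      ENNReal.ofReal |∫ s in t..T, ∫ a, h t s ω a * μf s t a ∂ν| ^ 2) ∂P)
      ≤ (⨆ t : Icc (0:ℝ) T, ∫⁻ s in Ioc (t : ℝ) T,
          ∫⁻ a, ENNReal.ofReal |μf s (t : ℝ) a| ∂ν)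
        * ∫⁻ ω, (∫⁻ t in Ioc (0:ℝ) T, ∫⁻ s in Ioc (0:ℝ) T, chi (t, s)
            * ∫⁻ a, ENNReal.ofReal |h t s ω a| ^ 2 * ENNReal.ofReal |μf s t a| ∂ν) ∂P := by
    have mono1 : ∀ ω : Ω, (∫⁻ t in Ioc (0:ℝ) T,
        ENNReal.ofReal |∫ s in t..T, ∫ a, h t s ω a * μf s t a ∂ν| ^ 2)
        ≤ ∫⁻ t in Ioc (0:ℝ) T, (⨆ t' : Icc (0:ℝ) T, ∫⁻ s in Ioc (t' : ℝ) T,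
            ∫⁻ a, ENNReal.ofReal |μf s (t' : ℝ) a| ∂ν)
          * ∫⁻ s in Ioc (0:ℝ) T, chi (t, s)
            * ∫⁻ a, ENNReal.ofReal |h t s ω a| ^ 2 * ENNReal.ofReal |μf s t a| ∂ν := by
      intro ω
      refine setLIntegral_mono' measurableSet_Ioc fun t ht => ?_
      refine le_trans (step1 ω t ht) ?_
      rw [← auxIndIoc ht.1.le]
      exact mul_le_mul_left (hQle t ht) _
    calc (∫⁻ ω, (∫⁻ t in Ioc (0:ℝ) T,
        ENNReal.ofReal |∫ s in t..T, ∫ a, h t s ω a * μf s t a ∂ν| ^ 2) ∂P)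
        ≤ ∫⁻ ω, (∫⁻ t in Ioc (0:ℝ) T, (⨆ t' : Icc (0:ℝ) T, ∫⁻ s in Ioc (t' : ℝ) T,
            ∫⁻ a, ENNReal.ofReal |μf s (t' : ℝ) a| ∂ν)
          * ∫⁻ s in Ioc (0:ℝ) T, chi (t, s)
            * ∫⁻ a, ENNReal.ofReal |h t s ω a| ^ 2 * ENNReal.ofReal |μf s t a| ∂ν) ∂P :=
          lintegral_mono mono1
      _ = ∫⁻ ω, ((⨆ t' : Icc (0:ℝ) T, ∫⁻ s in Ioc (t' : ℝ) T,
            ∫⁻ a, ENNReal.ofReal |μf s (t' : ℝ) a| ∂ν)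
          * ∫⁻ t in Ioc (0:ℝ) T, ∫⁻ s in Ioc (0:ℝ) T, chi (t, s)
            * ∫⁻ a, ENNReal.ofReal |h t s ω a| ^ 2 * ENNReal.ofReal |μf s t a| ∂ν) ∂P :=
          lintegral_congr fun ω => lintegral_const_mul _ (mRt ν hμf hh T ω)
      _ = _ := lintegral_const_mul _ (mG ν hμf hh T)
  -- Step 4 : reorder the integrals, putting a outermost
  have step4 : (∫⁻ ω, (∫⁻ t in Ioc (0:ℝ) T, ∫⁻ s in Ioc (0:ℝ) T, chi (t, s)
      * ∫⁻ a, ENNReal.ofReal |h t s ω a| ^ 2 * ENNReal.ofReal |μf s t a| ∂ν) ∂P)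
      = ∫⁻ a, (∫⁻ ω, (∫⁻ s in Ioc (0:ℝ) T, ∫⁻ t in Ioc (0:ℝ) T, chi (t, s)
          * (ENNReal.ofReal |h t s ω a| ^ 2 * ENNReal.ofReal |μf s t a|)) ∂P) ∂ν := by
    calc (∫⁻ ω, (∫⁻ t in Ioc (0:ℝ) T, ∫⁻ s in Ioc (0:ℝ) T, chi (t, s)
        * ∫⁻ a, ENNReal.ofReal |h t s ω a| ^ 2 * ENNReal.ofReal |μf s t a| ∂ν) ∂P)
        = ∫⁻ ω, (∫⁻ s in Ioc (0:ℝ) T, ∫⁻ t in Ioc (0:ℝ) T, chi (t, s)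
          * ∫⁻ a, ENNReal.ofReal |h t s ω a| ^ 2 * ENNReal.ofReal |μf s t a| ∂ν) ∂P :=
          lintegral_congr fun ω => auxSwap _ _ (mE1 ν hμf hh ω)
      _ = ∫⁻ ω, (∫⁻ s in Ioc (0:ℝ) T, ∫⁻ t in Ioc (0:ℝ) T,
            ∫⁻ a, chi (t, s) * (ENNReal.ofReal |h t s ω a| ^ 2
              * ENNReal.ofReal |μf s t a|) ∂ν) ∂P :=
          lintegral_congr fun ω => lintegral_congr fun s => lintegral_congr fun t =>
            (lintegral_const_mul _ (mPfa hμf hh t s ω)).symm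
      _ = ∫⁻ ω, (∫⁻ s in Ioc (0:ℝ) T, ∫⁻ a, (∫⁻ t in Ioc (0:ℝ) T,
            chi (t, s) * (ENNReal.ofReal |h t s ω a| ^ 2
              * ENNReal.ofReal |μf s t a|)) ∂ν) ∂P :=
          lintegral_congr fun ω => lintegral_congr fun s => auxSwap _ ν (mE3 hμf hh s ω)
      _ = ∫⁻ ω, (∫⁻ a, (∫⁻ s in Ioc (0:ℝ) T, ∫⁻ t in Ioc (0:ℝ) T,
            chi (t, s) * (ENNReal.ofReal |h t s ω a| ^ 2
              * ENNReal.ofReal |μf s t a|)) ∂ν) ∂P :=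
          lintegral_congr fun ω => auxSwap _ ν (mE4 hμf hh T ω)
      _ = ∫⁻ a, (∫⁻ ω, (∫⁻ s in Ioc (0:ℝ) T, ∫⁻ t in Ioc (0:ℝ) T,
            chi (t, s) * (ENNReal.ofReal |h t s ω a| ^ 2
              * ENNReal.ofReal |μf s t a|)) ∂P) ∂ν :=
          auxSwap P ν (mE5 hμf hh T)
  -- Step 5 : per-a bound
  have step5 : ∀ a : A, (∫⁻ ω, (∫⁻ s in Ioc (0:ℝ) T, ∫⁻ t in Ioc (0:ℝ) T, chi (t, s)
      * (ENNReal.ofReal |h t s ω a| ^ 2 * ENNReal.ofReal |μf s t a|)) ∂P)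
      ≤ (⨆ a' : A, ∫⁻ ω, (∫⁻ s in Ioc (0:ℝ) T,
          (⨆ t : Icc (0:ℝ) s, ENNReal.ofReal |h (t : ℝ) s ω a'|) ^ 2) ∂P)
        * ⨆ s : Icc (0:ℝ) T, ∫⁻ t in Ioc (0:ℝ) (s : ℝ),
            ENNReal.ofReal |μf (s : ℝ) t a| := by
    intro a
    have innerTB : ∀ ω : Ω, ∀ s ∈ Ioc (0:ℝ) T,
        (∫⁻ t in Ioc (0:ℝ) T, chi (t, s)
          * (ENNReal.ofReal |h t s ω a| ^ 2 * ENNReal.ofReal |μf s t a|))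
        ≤ (⨆ t : Icc (0:ℝ) s, ENNReal.ofReal |h (t : ℝ) s ω a|) ^ 2
          * ⨆ s' : Icc (0:ℝ) T, ∫⁻ t in Ioc (0:ℝ) (s' : ℝ),
              ENNReal.ofReal |μf (s' : ℝ) t a| := by
      intro ω s hs
      calc (∫⁻ t in Ioc (0:ℝ) T, chi (t, s)
            * (ENNReal.ofReal |h t s ω a| ^ 2 * ENNReal.ofReal |μf s t a|))
          ≤ ∫⁻ t in Ioc (0:ℝ) T,
            (⨆ t' : Icc (0:ℝ) s, ENNReal.ofReal |h (t' : ℝ) s ω a|) ^ 2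
              * (chi (t, s) * ENNReal.ofReal |μf s t a|) := by
            refine setLIntegral_mono' measurableSet_Ioc fun t ht => ?_
            by_cases hts : t < s
            · rw [chi_of_lt hts]
              simp only [one_mul]
              exact mul_le_mul_left (pow_le_pow_left₀ (zero_le)
                (le_iSup (fun t' : Icc (0:ℝ) s => ENNReal.ofReal |h (t' : ℝ) s ω a|)
                  ⟨t, ht.1.le, hts.le⟩) 2) _
            · rw [chi_of_not hts]
              simp
        _ = (⨆ t' : Icc (0:ℝ) s, ENNReal.ofReal |h (t' : ℝ) s ω a|) ^ 2
              * ∫⁻ t in Ioc (0:ℝ) T, chi (t, s) * ENNReal.ofReal |μf s t a| :=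
            lintegral_const_mul _ (mMchi2 hμf a s)
        _ ≤ (⨆ t' : Icc (0:ℝ) s, ENNReal.ofReal |h (t' : ℝ) s ω a|) ^ 2
              * ⨆ s' : Icc (0:ℝ) T, ∫⁻ t in Ioc (0:ℝ) (s' : ℝ),
                  ENNReal.ofReal |μf (s' : ℝ) t a| := by
            refine mul_le_mul_right (le_trans (auxTInt T s _) ?_) _
            exact le_iSup (fun s' : Icc (0:ℝ) T => ∫⁻ t in Ioc (0:ℝ) (s' : ℝ),
              ENNReal.ofReal |μf (s' : ℝ) t a|) ⟨s, hs.1.le, hs.2⟩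
    by_cases hSa : (⨆ s : Icc (0:ℝ) T, ∫⁻ t in Ioc (0:ℝ) (s : ℝ),
        ENNReal.ofReal |μf (s : ℝ) t a|) = ⊤
    · by_cases hF10 : (⨆ a' : A, ∫⁻ ω, (∫⁻ s in Ioc (0:ℝ) T,
          (⨆ t : Icc (0:ℝ) s, ENNReal.ofReal |h (t : ℝ) s ω a'|) ^ 2) ∂P) = 0
      · -- the value is zero
        have hval : (∫⁻ ω, (∫⁻ s in Ioc (0:ℝ) T, ∫⁻ t in Ioc (0:ℝ) T, chi (t, s)
            * (ENNReal.ofReal |h t s ω a| ^ 2 * ENNReal.ofReal |μf s t a|)) ∂P) = 0 := by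
          have swap1 : (∫⁻ ω, (∫⁻ s in Ioc (0:ℝ) T, ∫⁻ t in Ioc (0:ℝ) T, chi (t, s)
              * (ENNReal.ofReal |h t s ω a| ^ 2 * ENNReal.ofReal |μf s t a|)) ∂P)
              = ∫⁻ t in Ioc (0:ℝ) T, ∫⁻ ω, (∫⁻ s in Ioc (0:ℝ) T, chi (t, s)
                * (ENNReal.ofReal |h t s ω a| ^ 2 * ENNReal.ofReal |μf s t a|)) ∂P := by
            calc (∫⁻ ω, (∫⁻ s in Ioc (0:ℝ) T, ∫⁻ t in Ioc (0:ℝ) T, chi (t, s)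
                * (ENNReal.ofReal |h t s ω a| ^ 2 * ENNReal.ofReal |μf s t a|)) ∂P)
                = ∫⁻ ω, (∫⁻ t in Ioc (0:ℝ) T, ∫⁻ s in Ioc (0:ℝ) T, chi (t, s)
                  * (ENNReal.ofReal |h t s ω a| ^ 2 * ENNReal.ofReal |μf s t a|)) ∂P :=
                  lintegral_congr fun ω => auxSwap _ _ (mB1 hμf hh ω a)
              _ = ∫⁻ t in Ioc (0:ℝ) T, ∫⁻ ω, (∫⁻ s in Ioc (0:ℝ) T, chi (t, s)
                  * (ENNReal.ofReal |h t s ω a| ^ 2 * ENNReal.ofReal |μf s t a|)) ∂P :=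
                  auxSwap P _ (mB2 hμf hh T a)
          rw [swap1]
          refine le_antisymm ?_ (zero_le)
          calc (∫⁻ t in Ioc (0:ℝ) T, ∫⁻ ω, (∫⁻ s in Ioc (0:ℝ) T, chi (t, s)
              * (ENNReal.ofReal |h t s ω a| ^ 2 * ENNReal.ofReal |μf s t a|)) ∂P)
              ≤ ∫⁻ _t in Ioc (0:ℝ) T, 0 := by
                refine setLIntegral_mono' measurableSet_Ioc fun t ht => ?_
                have hz1 : (∫⁻ ω, (∫⁻ s in Ioc (0:ℝ) T,
                    chi (t, s) * ENNReal.ofReal |h t s ω a| ^ 2) ∂P) = 0 := by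
                  refine le_antisymm ?_ (zero_le)
                  calc (∫⁻ ω, (∫⁻ s in Ioc (0:ℝ) T,
                      chi (t, s) * ENNReal.ofReal |h t s ω a| ^ 2) ∂P)
                      ≤ ∫⁻ ω, (∫⁻ s in Ioc (0:ℝ) T,
                        (⨆ t' : Icc (0:ℝ) s, ENNReal.ofReal |h (t' : ℝ) s ω a|) ^ 2) ∂P := by
                        refine lintegral_mono fun ω => ?_
                        refine setLIntegral_mono' measurableSet_Ioc fun s hs => ?_
                        by_cases hts : t < s
                        · rw [chi_of_lt hts, one_mul]
                          exact pow_le_pow_left₀ (zero_le)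
                            (le_iSup (fun t' : Icc (0:ℝ) s =>
                              ENNReal.ofReal |h (t' : ℝ) s ω a|) ⟨t, ht.1.le, hts.le⟩) 2
                        · rw [chi_of_not hts, zero_mul]
                          exact zero_le
                    _ ≤ ⨆ a' : A, ∫⁻ ω, (∫⁻ s in Ioc (0:ℝ) T,
                        (⨆ t' : Icc (0:ℝ) s, ENNReal.ofReal |h (t' : ℝ) s ω a'|) ^ 2) ∂P :=
                        le_iSup (fun a' : A => ∫⁻ ω, (∫⁻ s in Ioc (0:ℝ) T,
                          (⨆ t' : Icc (0:ℝ) s,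
                            ENNReal.ofReal |h (t' : ℝ) s ω a'|) ^ 2) ∂P) a
                    _ = 0 := hF10
                have haeω := (lintegral_eq_zero_iff (mZ hh T t a)).mp hz1
                refine le_of_eq ?_
                calc (∫⁻ ω, (∫⁻ s in Ioc (0:ℝ) T, chi (t, s)
                    * (ENNReal.ofReal |h t s ω a| ^ 2 * ENNReal.ofReal |μf s t a|)) ∂P)
                    = ∫⁻ _ω, 0 ∂P := by
                      refine lintegral_congr_ae ?_
                      filter_upwards [haeω] with ω hω
                      have haes := (lintegral_eq_zero_iff (mHchi_s hh t ω a)).mp hω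
                      calc (∫⁻ s in Ioc (0:ℝ) T, chi (t, s)
                          * (ENNReal.ofReal |h t s ω a| ^ 2 * ENNReal.ofReal |μf s t a|))
                          = ∫⁻ _s in Ioc (0:ℝ) T, 0 := by
                            refine lintegral_congr_ae ?_
                            filter_upwards [haes] with s hss
                            have hss' : chi (t, s) * ENNReal.ofReal |h t s ω a| ^ 2 = 0 := hss
                            rw [← mul_assoc, hss', zero_mul]
                          _ = 0 := lintegral_zero
                  _ = 0 := lintegral_zero
            _ = 0 := lintegral_zero
        rw [hval]
        exact zero_le
      · rw [hSa, ENNReal.mul_top hF10]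
        exact le_top
    · calc (∫⁻ ω, (∫⁻ s in Ioc (0:ℝ) T, ∫⁻ t in Ioc (0:ℝ) T, chi (t, s)
          * (ENNReal.ofReal |h t s ω a| ^ 2 * ENNReal.ofReal |μf s t a|)) ∂P)
          ≤ ∫⁻ ω, (∫⁻ s in Ioc (0:ℝ) T,
            (⨆ t : Icc (0:ℝ) s, ENNReal.ofReal |h (t : ℝ) s ω a|) ^ 2
              * ⨆ s' : Icc (0:ℝ) T, ∫⁻ t in Ioc (0:ℝ) (s' : ℝ),
                  ENNReal.ofReal |μf (s' : ℝ) t a|) ∂P :=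
            lintegral_mono fun ω => setLIntegral_mono' measurableSet_Ioc
              fun s hs => innerTB ω s hs
        _ = ∫⁻ ω, ((∫⁻ s in Ioc (0:ℝ) T,
            (⨆ t : Icc (0:ℝ) s, ENNReal.ofReal |h (t : ℝ) s ω a|) ^ 2)
              * ⨆ s' : Icc (0:ℝ) T, ∫⁻ t in Ioc (0:ℝ) (s' : ℝ),
                  ENNReal.ofReal |μf (s' : ℝ) t a|) ∂P :=
            lintegral_congr fun ω => lintegral_mul_const' _ _ hSa
        _ = (∫⁻ ω, (∫⁻ s in Ioc (0:ℝ) T,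
            (⨆ t : Icc (0:ℝ) s, ENNReal.ofReal |h (t : ℝ) s ω a|) ^ 2) ∂P)
              * ⨆ s' : Icc (0:ℝ) T, ∫⁻ t in Ioc (0:ℝ) (s' : ℝ),
                  ENNReal.ofReal |μf (s' : ℝ) t a| :=
            lintegral_mul_const' _ _ hSa
        _ ≤ (⨆ a' : A, ∫⁻ ω, (∫⁻ s in Ioc (0:ℝ) T,
            (⨆ t : Icc (0:ℝ) s, ENNReal.ofReal |h (t : ℝ) s ω a'|) ^ 2) ∂P)
              * ⨆ s' : Icc (0:ℝ) T, ∫⁻ t in Ioc (0:ℝ) (s' : ℝ),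
                  ENNReal.ofReal |μf (s' : ℝ) t a| :=
            mul_le_mul_left (le_iSup (fun a' : A => ∫⁻ ω, (∫⁻ s in Ioc (0:ℝ) T,
              (⨆ t : Icc (0:ℝ) s, ENNReal.ofReal |h (t : ℝ) s ω a'|) ^ 2) ∂P) a) _
  -- Conclusion
  calc (∫⁻ ω, (∫⁻ t in Ioc (0:ℝ) T,
        ENNReal.ofReal |∫ s in t..T, ∫ a, h t s ω a * μf s t a ∂ν| ^ 2) ∂P)
      ≤ (⨆ t : Icc (0:ℝ) T, ∫⁻ s in Ioc (t : ℝ) T,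
          ∫⁻ a, ENNReal.ofReal |μf s (t : ℝ) a| ∂ν)
        * ∫⁻ ω, (∫⁻ t in Ioc (0:ℝ) T, ∫⁻ s in Ioc (0:ℝ) T, chi (t, s)
            * ∫⁻ a, ENNReal.ofReal |h t s ω a| ^ 2 * ENNReal.ofReal |μf s t a| ∂ν) ∂P :=
        step3
    _ = (⨆ t : Icc (0:ℝ) T, ∫⁻ s in Ioc (t : ℝ) T,
          ∫⁻ a, ENNReal.ofReal |μf s (t : ℝ) a| ∂ν)
        * ∫⁻ a, (∫⁻ ω, (∫⁻ s in Ioc (0:ℝ) T, ∫⁻ t in Ioc (0:ℝ) T, chi (t, s)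
            * (ENNReal.ofReal |h t s ω a| ^ 2 * ENNReal.ofReal |μf s t a|)) ∂P) ∂ν := by
        rw [step4]
    _ ≤ (⨆ t : Icc (0:ℝ) T, ∫⁻ s in Ioc (t : ℝ) T,
          ∫⁻ a, ENNReal.ofReal |μf s (t : ℝ) a| ∂ν)
        * ∫⁻ a, ((⨆ a' : A, ∫⁻ ω, (∫⁻ s in Ioc (0:ℝ) T,
            (⨆ t : Icc (0:ℝ) s, ENNReal.ofReal |h (t : ℝ) s ω a'|) ^ 2) ∂P)
          * ⨆ s : Icc (0:ℝ) T, ∫⁻ t in Ioc (0:ℝ) (s : ℝ),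
              ENNReal.ofReal |μf (s : ℝ) t a|) ∂ν :=
        mul_le_mul_right (lintegral_mono fun a => step5 a) _
    _ = (⨆ t : Icc (0:ℝ) T, ∫⁻ s in Ioc (t : ℝ) T,
          ∫⁻ a, ENNReal.ofReal |μf s (t : ℝ) a| ∂ν)
        * ((⨆ a' : A, ∫⁻ ω, (∫⁻ s in Ioc (0:ℝ) T,
            (⨆ t : Icc (0:ℝ) s, ENNReal.ofReal |h (t : ℝ) s ω a'|) ^ 2) ∂P)
          * ∫⁻ a, (⨆ s : Icc (0:ℝ) T, ∫⁻ t in Ioc (0:ℝ) (s : ℝ),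
              ENNReal.ofReal |μf (s : ℝ) t a|) ∂ν) := by
        rw [lintegral_const_mul' _ _ hF1top]
    _ = _ := by ring
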